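/- Let 𝒫 be a nonempty set of Borel probability measures on a Polish space Ω and φ: Ω × ℝ → ℝ a jointly measurable function with φ(ω,·) convex, ω ↦ φ(ω,x) upper semicontinuous for each x, sup_{P∈𝒫} E_P[φ(·,x)⁺] < ∞ for each x, and such that there exists a measurable η with sup_{P∈𝒫} E_P[|η|] < ∞ and sup_{P∈𝒫} E_P[φ*(·,η)⁺] < ∞. Then the functional I(f) := sup_{P∈𝒫} ∫ φ(ω, f(ω)) dP(ω) is finite for every f ∈ C_b(Ω), convex in f, and lower semicontinuous along uniformly bounded pointwise convergent sequences: if sup_n ‖f_n‖_∞ < ∞ and f_n → f pointwise, then I(f) ≤ liminf_n I(f_n). -/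

import Mathlib

open MeasureTheory Filter Topology

private lemma sup_rat_ofReal (g : ℝ → ℝ) (hg : Continuous g) :
    (⨆ x : ℝ, ENNReal.ofReal (g x)) = ⨆ q : ℚ, ENNReal.ofReal (g (q : ℝ)) := by
  refine le_antisymm (iSup_le fun x => ?_) (iSup_le fun q => le_iSup_of_le (q : ℝ) le_rfl)
  have hx : x ∈ closure (Set.range ((↑) : ℚ → ℝ)) := by
    rw [Rat.denseRange_cast.closure_eq]; trivial
  obtain ⟨u, hu, hulim⟩ := mem_closure_iff_seq_limit.1 hx
  have : Tendsto (fun n => ENNReal.ofReal (g (u n))) atTop (𝓝 (ENNReal.ofReal (g x))) :=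
    (ENNReal.continuous_ofReal.comp hg).continuousAt.tendsto.comp hulim
  refine le_of_tendsto this (Eventually.of_forall fun n => ?_)
  obtain ⟨q, hq⟩ := hu n
  exact hq ▸ le_iSup (fun q : ℚ => ENNReal.ofReal (g (q : ℝ))) q

theorem stmt_4 {Ω : Type*} [TopologicalSpace Ω] [PolishSpace Ω]
    [MeasurableSpace Ω] [BorelSpace Ω]
    (Ps : Set (Measure Ω)) (hPsne : Ps.Nonempty)
    (hPsprob : ∀ P ∈ Ps, IsProbabilityMeasure P)
    (φ : Ω → ℝ → ℝ)
    (hφmeas : Measurable (Function.uncurry φ))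
    (hconv : ∀ ω, ConvexOn ℝ Set.univ (φ ω))
    (husc : ∀ x : ℝ, UpperSemicontinuous (fun ω => φ ω x))
    (hplus : ∀ x : ℝ,
      (⨆ P : Ps, ∫⁻ ω, ENNReal.ofReal (max (φ ω x) 0) ∂(P : Measure Ω)) < ⊤)
    (η : Ω → ℝ) (hη : Measurable η)
    (hη1 : (⨆ P : Ps, ∫⁻ ω, ENNReal.ofReal |η ω| ∂(P : Measure Ω)) < ⊤)
    (hηstar : (⨆ P : Ps,
      ∫⁻ ω, ⨆ x : ℝ, ENNReal.ofReal (x * η ω - φ ω x) ∂(P : Measure Ω)) < ⊤)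
    (I : BoundedContinuousFunction Ω ℝ → ℝ)
    (hI : ∀ f, I f = ⨆ P : Ps, ∫ ω, φ ω (f ω) ∂(P : Measure Ω)) :
    (∀ f : BoundedContinuousFunction Ω ℝ,
        BddAbove (Set.range fun P : Ps => ∫ ω, φ ω (f ω) ∂(P : Measure Ω))) ∧
    ConvexOn ℝ Set.univ I ∧
    (∀ (fn : ℕ → BoundedContinuousFunction Ω ℝ) (f : BoundedContinuousFunction Ω ℝ),
      (∃ C : ℝ, ∀ n, ‖fn n‖ ≤ C) →
      (∀ ω, Tendsto (fun n => fn n ω) atTop (𝓝 (f ω))) →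
      I f ≤ liminf (fun n => I (fn n)) atTop) := by
  obtain ⟨P₀, hP₀⟩ := hPsne
  haveI : Nonempty Ps := ⟨⟨P₀, hP₀⟩⟩
  have hcont : ∀ ω, Continuous (φ ω) := fun ω => by
    rw [← continuousOn_univ]
    exact (hconv ω).continuousOn isOpen_univ
  have hφu : ∀ u : Ω → ℝ, Measurable u → Measurable fun ω => φ ω (u ω) :=
    fun u hu => hφmeas.comp (measurable_id.prodMk hu)
  set s : Ω → ENNReal := fun ω => ⨆ x : ℝ, ENNReal.ofReal (x * η ω - φ ω x) with hs_def
  have hsmeas : Measurable s := by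
    have hse : s = fun ω => ⨆ q : ℚ, ENNReal.ofReal ((q : ℝ) * η ω - φ ω (q : ℝ)) := by
      funext ω
      exact sup_rat_ofReal _ ((continuous_id.mul continuous_const).sub (hcont ω))
    rw [hse]
    exact Measurable.iSup fun q =>
      ((hη.const_mul _).sub (hφu _ measurable_const)).ennreal_ofReal
  -- finiteness per measure
  have hlt : ∀ (x : ℝ) (P : Measure Ω), P ∈ Ps →
      ∫⁻ ω, ENNReal.ofReal (max (φ ω x) 0) ∂P < ⊤ := fun x P hP =>
    lt_of_le_of_lt
      (le_iSup (fun P : Ps => ∫⁻ ω, ENNReal.ofReal (max (φ ω x) 0) ∂(P : Measure Ω)) ⟨P, hP⟩)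
      (hplus x)
  have hposmeas : ∀ x : ℝ, Measurable fun ω => max (φ ω x) 0 :=
    fun x => (hφu _ measurable_const).max measurable_const
  have hpos_int : ∀ (x : ℝ) (P : Measure Ω), P ∈ Ps →
      Integrable (fun ω => max (φ ω x) 0) P := fun x P hP =>
    ⟨(hposmeas x).aestronglyMeasurable,
      (hasFiniteIntegral_iff_ofReal (Eventually.of_forall fun ω => le_max_right _ _)).2
        (hlt x P hP)⟩
  have hpos_bd : ∀ (x : ℝ) (P : Measure Ω), P ∈ Ps →
      ∫ ω, max (φ ω x) 0 ∂P ≤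
        (⨆ P : Ps, ∫⁻ ω, ENNReal.ofReal (max (φ ω x) 0) ∂(P : Measure Ω)).toReal := by
    intro x P hP
    have h1 : ENNReal.ofReal (∫ ω, max (φ ω x) 0 ∂P)
        = ∫⁻ ω, ENNReal.ofReal (max (φ ω x) 0) ∂P :=
      ofReal_integral_eq_lintegral_ofReal (hpos_int x P hP)
        (Eventually.of_forall fun ω => le_max_right _ _)
    have h2 : ENNReal.ofReal (∫ ω, max (φ ω x) 0 ∂P)
        ≤ ⨆ P : Ps, ∫⁻ ω, ENNReal.ofReal (max (φ ω x) 0) ∂(P : Measure Ω) := by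
      rw [h1]
      exact le_iSup (fun P : Ps => ∫⁻ ω, ENNReal.ofReal (max (φ ω x) 0) ∂(P : Measure Ω)) ⟨P, hP⟩
    calc ∫ ω, max (φ ω x) 0 ∂P
        = (ENNReal.ofReal (∫ ω, max (φ ω x) 0 ∂P)).toReal :=
          (ENNReal.toReal_ofReal (integral_nonneg fun ω => le_max_right _ _)).symm
      _ ≤ _ := ENNReal.toReal_mono (hplus x).ne h2
  have hη_int : ∀ P : Measure Ω, P ∈ Ps → Integrable (fun ω => |η ω|) P := fun P hP =>
    ⟨hη.abs.aestronglyMeasurable,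
      (hasFiniteIntegral_iff_ofReal (Eventually.of_forall fun ω => abs_nonneg _)).2
        (lt_of_le_of_lt
          (le_iSup (fun P : Ps => ∫⁻ ω, ENNReal.ofReal |η ω| ∂(P : Measure Ω)) ⟨P, hP⟩) hη1)⟩
  have hs_fin : ∀ P : Measure Ω, P ∈ Ps → ∫⁻ ω, s ω ∂P < ⊤ := fun P hP =>
    lt_of_le_of_lt (le_iSup (fun P : Ps => ∫⁻ ω, s ω ∂(P : Measure Ω)) ⟨P, hP⟩) hηstar
  have hs_ae : ∀ P : Measure Ω, P ∈ Ps → ∀ᵐ ω ∂P, s ω < ⊤ := fun P hP =>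
    ae_lt_top hsmeas (hs_fin P hP).ne
  have hH_int : ∀ P : Measure Ω, P ∈ Ps → Integrable (fun ω => (s ω).toReal) P := by
    intro P hP
    refine ⟨hsmeas.ennreal_toReal.aestronglyMeasurable,
      (hasFiniteIntegral_iff_ofReal
        (Eventually.of_forall fun ω => ENNReal.toReal_nonneg)).2 ?_⟩
    exact lt_of_le_of_lt (lintegral_mono fun ω => ENNReal.ofReal_toReal_le) (hs_fin P hP)
  -- Young's inequality lower bound
  have hyoung : ∀ ω, s ω ≠ ⊤ → ∀ x : ℝ, x * η ω - (s ω).toReal ≤ φ ω x := by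
    intro ω hω x
    have h1 : ENNReal.ofReal (x * η ω - φ ω x) ≤ s ω := by
      rw [hs_def]
      exact le_iSup (fun x : ℝ => ENNReal.ofReal (x * η ω - φ ω x)) x
    rcases le_or_gt (x * η ω - φ ω x) 0 with h0 | h0
    · have := ENNReal.toReal_nonneg (a := s ω); linarith
    · have := (ENNReal.ofReal_le_iff_le_toReal hω).1 h1; linarith
  -- convexity upper bound
  have hUb : ∀ (ω : Ω) (M x : ℝ), |x| ≤ M →
      φ ω x ≤ max (φ ω M) 0 + max (φ ω (-M)) 0 := by
    intro ω M x hx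
    have hM : -M ≤ M := by
      have h0 := (abs_nonneg x).trans hx; linarith
    have hseg : x ∈ segment ℝ (-M) M := by
      rw [segment_eq_Icc hM]
      exact ⟨(abs_le.1 hx).1, (abs_le.1 hx).2⟩
    have a5 := (hconv ω).le_on_segment (Set.mem_univ (-M)) (Set.mem_univ M) hseg
    have a1 : φ ω M ≤ max (φ ω M) 0 := le_max_left _ _
    have a2 : φ ω (-M) ≤ max (φ ω (-M)) 0 := le_max_left _ _
    have a3 : (0 : ℝ) ≤ max (φ ω M) 0 := le_max_right _ _
    have a4 : (0 : ℝ) ≤ max (φ ω (-M)) 0 := le_max_right _ _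
    rcases le_total (φ ω (-M)) (φ ω M) with h | h
    · rw [max_eq_right h] at a5; linarith
    · rw [max_eq_left h] at a5; linarith
  -- absolute bound
  have habs : ∀ M : ℝ, 0 ≤ M → ∀ ω, s ω ≠ ⊤ → ∀ x : ℝ, |x| ≤ M →
      ‖φ ω x‖ ≤ max (φ ω M) 0 + max (φ ω (-M)) 0 + (M * |η ω| + (s ω).toReal) := by
    intro M hM0 ω hω x hx
    have young := hyoung ω hω x
    have hprod : |x * η ω| ≤ M * |η ω| := by
      rw [abs_mul]; exact mul_le_mul_of_nonneg_right hx (abs_nonneg _)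
    have hub1 := hUb ω M x hx
    have a3 : (0 : ℝ) ≤ max (φ ω M) 0 := le_max_right _ _
    have a4 : (0 : ℝ) ≤ max (φ ω (-M)) 0 := le_max_right _ _
    have a5 : (0 : ℝ) ≤ (s ω).toReal := ENNReal.toReal_nonneg
    have a6 : (0 : ℝ) ≤ M * |η ω| := mul_nonneg hM0 (abs_nonneg _)
    have a7 := neg_abs_le (x * η ω)
    rw [Real.norm_eq_abs, abs_le]
    constructor <;> linarith
  -- integrability
  have hbnd_int : ∀ (M : ℝ) (P : Measure Ω), P ∈ Ps →
      Integrable (fun ω => max (φ ω M) 0 + max (φ ω (-M)) 0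
        + (M * |η ω| + (s ω).toReal)) P := fun M P hP =>
    ((hpos_int M P hP).add (hpos_int (-M) P hP)).add
      (((hη_int P hP).const_mul M).add (hH_int P hP))
  have hint : ∀ (P : Measure Ω), P ∈ Ps → ∀ (u : Ω → ℝ) (M : ℝ), 0 ≤ M →
      Measurable u → (∀ ω, |u ω| ≤ M) → Integrable (fun ω => φ ω (u ω)) P := by
    intro P hP u M hM0 hu hbd
    refine (hbnd_int M P hP).mono' (hφu u hu).aestronglyMeasurable ?_
    filter_upwards [hs_ae P hP] with ω hω
    exact habs M hM0 ω hω.ne (u ω) (hbd ω)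
  -- uniform upper bound on integrals
  have hub : ∀ (P : Measure Ω), P ∈ Ps → ∀ (u : Ω → ℝ) (M : ℝ), 0 ≤ M →
      Measurable u → (∀ ω, |u ω| ≤ M) →
      ∫ ω, φ ω (u ω) ∂P ≤
        (⨆ P : Ps, ∫⁻ ω, ENNReal.ofReal (max (φ ω M) 0) ∂(P : Measure Ω)).toReal
        + (⨆ P : Ps, ∫⁻ ω, ENNReal.ofReal (max (φ ω (-M)) 0) ∂(P : Measure Ω)).toReal := by
    intro P hP u M hM0 hu hbd
    have h1 : ∫ ω, φ ω (u ω) ∂P ≤ ∫ ω, (max (φ ω M) 0 + max (φ ω (-M)) 0) ∂P :=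
      integral_mono (hint P hP u M hM0 hu hbd)
        ((hpos_int M P hP).add (hpos_int (-M) P hP))
        (fun ω => hUb ω M (u ω) (hbd ω))
    rw [integral_add (hpos_int M P hP) (hpos_int (-M) P hP)] at h1
    exact h1.trans (add_le_add (hpos_bd M P hP) (hpos_bd (-M) P hP))
  have hfbd : ∀ (f : BoundedContinuousFunction Ω ℝ) (ω : Ω), |f ω| ≤ ‖f‖ := by
    intro f ω
    have := f.norm_coe_le_norm ω
    rwa [Real.norm_eq_abs] at this
  -- Part 1
  have part1 : ∀ f : BoundedContinuousFunction Ω ℝ,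
      BddAbove (Set.range fun P : Ps => ∫ ω, φ ω (f ω) ∂(P : Measure Ω)) := by
    intro f
    refine ⟨(⨆ P : Ps, ∫⁻ ω, ENNReal.ofReal (max (φ ω ‖f‖) 0) ∂(P : Measure Ω)).toReal
      + (⨆ P : Ps, ∫⁻ ω, ENNReal.ofReal (max (φ ω (-‖f‖)) 0) ∂(P : Measure Ω)).toReal, ?_⟩
    rintro y ⟨P, rfl⟩
    exact hub P.1 P.2 f ‖f‖ (norm_nonneg f) f.continuous.measurable (hfbd f)
  have hle_I : ∀ (f : BoundedContinuousFunction Ω ℝ) (P : Ps),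
      ∫ ω, φ ω (f ω) ∂(P : Measure Ω) ≤ I f := by
    intro f P
    rw [hI f]
    exact le_ciSup (part1 f) P
  refine ⟨part1, ⟨convex_univ, ?_⟩, ?_⟩
  · -- convexity
    intro f _ g _ a b ha hb hab
    rw [hI, smul_eq_mul, smul_eq_mul]
    refine ciSup_le fun P => ?_
    obtain ⟨P, hP⟩ := P
    have hcoe : ∀ ω, (a • f + b • g) ω = a * f ω + b * g ω := by
      intro ω; simp [smul_eq_mul]
    have hint1 : Integrable (fun ω => φ ω (f ω)) P :=
      hint P hP f ‖f‖ (norm_nonneg f) f.continuous.measurable (hfbd f)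
    have hint2 : Integrable (fun ω => φ ω (g ω)) P :=
      hint P hP g ‖g‖ (norm_nonneg g) g.continuous.measurable (hfbd g)
    have h1 : ∫ ω, φ ω ((a • f + b • g) ω) ∂P
        ≤ ∫ ω, (a * φ ω (f ω) + b * φ ω (g ω)) ∂P := by
      refine integral_mono
        (hint P hP _ ‖a • f + b • g‖ (norm_nonneg _)
          (a • f + b • g).continuous.measurable (hfbd _))
        ((hint1.const_mul a).add (hint2.const_mul b)) (fun ω => ?_)
      have := (hconv ω).2 (Set.mem_univ (f ω)) (Set.mem_univ (g ω)) ha hb hab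
      simpa [hcoe ω, smul_eq_mul] using this
    have h2 : ∫ ω, (a * φ ω (f ω) + b * φ ω (g ω)) ∂P
        = a * ∫ ω, φ ω (f ω) ∂P + b * ∫ ω, φ ω (g ω) ∂P := by
      rw [integral_add (hint1.const_mul a) (hint2.const_mul b),
        integral_const_mul, integral_const_mul]
    refine h1.trans (h2.le.trans ?_)
    exact add_le_add (mul_le_mul_of_nonneg_left (hle_I f ⟨P, hP⟩) ha)
      (mul_le_mul_of_nonneg_left (hle_I g ⟨P, hP⟩) hb)
  · -- lower semicontinuity
    rintro fn f ⟨C0, hC0⟩ hptw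
    set M : ℝ := max C0 ‖f‖ with hM
    have hM0 : 0 ≤ M := (norm_nonneg f).trans (le_max_right _ _)
    have hfnbd : ∀ n ω, |fn n ω| ≤ M := fun n ω =>
      (hfbd (fn n) ω).trans ((hC0 n).trans (le_max_left _ _))
    have hfbd' : ∀ ω, |f ω| ≤ M := fun ω => (hfbd f ω).trans (le_max_right _ _)
    have key : ∀ P : Measure Ω, P ∈ Ps →
        Tendsto (fun n => ∫ ω, φ ω (fn n ω) ∂P) atTop (𝓝 (∫ ω, φ ω (f ω) ∂P)) := by
      intro P hP
      refine tendsto_integral_of_dominated_convergence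
        (fun ω => max (φ ω M) 0 + max (φ ω (-M)) 0 + (M * |η ω| + (s ω).toReal))
        (fun n => (hφu _ (fn n).continuous.measurable).aestronglyMeasurable)
        (hbnd_int M P hP) (fun n => ?_) ?_
      · filter_upwards [hs_ae P hP] with ω hω
        exact habs M hM0 ω hω.ne (fn n ω) (hfnbd n ω)
      · exact Eventually.of_forall fun ω =>
          ((hcont ω).tendsto (f ω)).comp (hptw ω)
    have hlimfix : ∀ P : Measure Ω, P ∈ Ps →
        ∫ ω, φ ω (f ω) ∂P ≤ liminf (fun n => I (fn n)) atTop := by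
      intro P hP
      have hIupper : ∀ n, I (fn n) ≤
          (⨆ P : Ps, ∫⁻ ω, ENNReal.ofReal (max (φ ω M) 0) ∂(P : Measure Ω)).toReal
          + (⨆ P : Ps, ∫⁻ ω, ENNReal.ofReal (max (φ ω (-M)) 0) ∂(P : Measure Ω)).toReal := by
        intro n
        rw [hI]
        exact ciSup_le fun Q => hub Q.1 Q.2 (fn n) M hM0
          (fn n).continuous.measurable (fun ω => hfnbd n ω)
      rw [← (key P hP).liminf_eq]
      refine liminf_le_liminf (Eventually.of_forall fun n => hle_I (fn n) ⟨P, hP⟩)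
        (key P hP).isBoundedUnder_ge
        (IsBoundedUnder.isCoboundedUnder_ge ⟨_, eventually_map.2
          (Eventually.of_forall hIupper)⟩)
    rw [hI]
    exact ciSup_le fun P => hlimfix P.1 P.2
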